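/- Let F : ℝⁿ → ℝⁿ be differentiable and bijective with differentiable inverse G, and suppose JH := JF − I has linearly independent rows over ℝ at the level of functions (i.e., the only constant vector c with cᵀ JH(x) = 0 for all x is c = 0) and JH(x) is nilpotent for all x. Write G = X + H̄ and H̃ = λH̄(λ^{-1}X) appropriately; in the special case λ = 1: if cᵀ JH̄(y) = 0 for all y, with JH̄(y) = Σ_{i=1}^{d}(−1)^i N(G(y))^i and N = JH, then cᵀ N(x) = 0 for all x, hence c = 0. Thus the rows of JH̄ are linearly independent over ℝ. -/

import Mathlib

/-- if `F = X + H` is bijective with inverse `G = X + H̄`, `JH` everywhere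
nilpotent of index `d+1`, and the rows of `JH` are linearly independent over `ℝ` (as
functions), then the rows of `JH̄` are linearly independent over `ℝ`. -/
theorem stmt18 (n d : ℕ) (H Hb : (Fin n → ℝ) → (Fin n → ℝ))
    (hH : Differentiable ℝ H) (hHb : Differentiable ℝ Hb)
    (F G : (Fin n → ℝ) → (Fin n → ℝ))
    (hF : ∀ x, F x = x + H x) (hG : ∀ y, G y = y + Hb y)
    (hGF : Function.LeftInverse G F) (hFG : Function.RightInverse G F)
    (hnil : ∀ x, (fderiv ℝ H x) ^ (d+1) = 0)
    (hIndep : ∀ c : Fin n → ℝ,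
      (∀ x v, ∑ i, c i * fderiv ℝ H x v i = 0) → c = 0) :
    ∀ c : Fin n → ℝ, (∀ y v, ∑ i, c i * fderiv ℝ Hb y v i = 0) → c = 0 := by
  intro c hc
  have hFfun : F = fun x => x + H x := funext hF
  have hGfun : G = fun y => y + Hb y := funext hG
  have hFd : Differentiable ℝ F := by
    rw [hFfun]; exact differentiable_id.add hH
  have hGd : Differentiable ℝ G := by
    rw [hGfun]; exact differentiable_id.add hHb
  have hdF : ∀ x v, fderiv ℝ F x v = v + fderiv ℝ H x v := by
    intro x v
    have h := ((hasFDerivAt_id x).fun_add (hH x).hasFDerivAt).fderiv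
    simp only [id_eq] at h; rw [hFfun, h]; rfl
  have hdG : ∀ y v, fderiv ℝ G y v = v + fderiv ℝ Hb y v := by
    intro y v
    have h := ((hasFDerivAt_id y).fun_add (hHb y).hasFDerivAt).fderiv
    simp only [id_eq] at h; rw [hGfun, h]; rfl
  -- chain rule: fderiv G (F x) (fderiv F x v) = v
  have hchain : ∀ x v, fderiv ℝ G (F x) (fderiv ℝ F x v) = v := by
    intro x v
    have h1 : (G ∘ F) = id := funext hGF
    have h2 : fderiv ℝ (G ∘ F) x = (fderiv ℝ G (F x)).comp (fderiv ℝ F x) :=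
      fderiv_comp x (hGd (F x)) (hFd x)
    have h3 : fderiv ℝ (G ∘ F) x = ContinuousLinearMap.id ℝ _ := by
      rw [h1, fderiv_id]
    have := h2.symm.trans h3
    calc fderiv ℝ G (F x) (fderiv ℝ F x v)
        = ((fderiv ℝ G (F x)).comp (fderiv ℝ F x)) v := rfl
      _ = (ContinuousLinearMap.id ℝ _) v := by rw [this]
      _ = v := rfl
  -- for any u, ∑ c i * fderiv G y u i = ∑ c i * u i
  have hG0 : ∀ y u, ∑ i, c i * fderiv ℝ G y u i = ∑ i, c i * u i := by
    intro y u
    have := hc y u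
    calc ∑ i, c i * fderiv ℝ G y u i
        = ∑ i, (c i * u i + c i * fderiv ℝ Hb y u i) := by
          apply Finset.sum_congr rfl
          intro i _
          rw [hdG]; simp [Pi.add_apply, mul_add]
      _ = (∑ i, c i * u i) + ∑ i, c i * fderiv ℝ Hb y u i := Finset.sum_add_distrib
      _ = ∑ i, c i * u i := by rw [this, add_zero]
  -- deduce cᵀ JH = 0
  apply hIndep
  intro x v
  have key : ∑ i, c i * (fderiv ℝ F x v) i = ∑ i, c i * v i := by
    have h1 := hG0 (F x) (fderiv ℝ F x v)
    rw [← h1]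
    apply Finset.sum_congr rfl
    intro i _
    rw [hchain x v]
  have : ∑ i, (c i * v i + c i * fderiv ℝ H x v i) = ∑ i, c i * v i := by
    rw [← key]
    apply Finset.sum_congr rfl
    intro i _
    rw [hdF]; simp [Pi.add_apply, mul_add]
  rw [Finset.sum_add_distrib] at this
  linarith [this]
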